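/- Let ℓ > 0, n ∈ ℤ and 0 < r < π/ℓ. Then (1/(2πi)) ∮_{|k − nπ/ℓ| = r} (cot(kℓ)/(k sin(kℓ))) dk equals −(−1)ⁿ/(n²π²) if n ≠ 0, and equals −1/6 if n = 0, where the circle is traversed once counterclockwise. -/

import Mathlib

open Real Metric Function

private lemma hasDerivAt_sinL (L k : ℂ) :
    HasDerivAt (fun z : ℂ => Complex.sin (z * L)) (Complex.cos (k * L) * L) k := by
  exact ((Complex.hasDerivAt_sin (k * L)).comp k ((hasDerivAt_id k).mul_const L)).congr_deriv (g' := Complex.cos (k * L) * L) (by ring)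

private lemma hasDerivAt_F1 (L : ℂ) {k : ℂ} (hs : Complex.sin (k * L) ≠ 0) (hk : k ≠ 0)
    (hL : L ≠ 0) :
    HasDerivAt (fun z : ℂ => -(L * z * Complex.sin (z * L))⁻¹)
      (Complex.cos (k * L) / (k * Complex.sin (k * L) ^ 2)
        + (L * k ^ 2 * Complex.sin (k * L))⁻¹) k := by
  have h1 : HasDerivAt (fun z : ℂ => L * z) L k := by
    simpa using (hasDerivAt_id k).const_mul L
  have hu : HasDerivAt (fun z : ℂ => L * z * Complex.sin (z * L))
      (L * Complex.sin (k * L) + L * k * (Complex.cos (k * L) * L)) k :=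
    h1.mul (hasDerivAt_sinL L k)
  have hu0 : L * k * Complex.sin (k * L) ≠ 0 := mul_ne_zero (mul_ne_zero hL hk) hs
  have h2 := (hu.inv hu0).neg
  have e1 : (L * k * Complex.sin (k * L)) ^ 2 ≠ 0 := pow_ne_zero 2 hu0
  have e2 : k * Complex.sin (k * L) ^ 2 ≠ 0 := mul_ne_zero hk (pow_ne_zero 2 hs)
  have e3 : L * k ^ 2 * Complex.sin (k * L) ≠ 0 :=
    mul_ne_zero (mul_ne_zero hL (pow_ne_zero 2 hk)) hs
  refine h2.congr_deriv ?_
  symm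
  rw [neg_div, neg_neg, eq_div_iff e1, add_mul, div_mul_eq_mul_div, inv_mul_eq_div,
    div_add_div _ _ e2 e3, div_eq_iff (mul_ne_zero e2 e3)]
  ring

private lemma aux_decomp (l z s : ℂ) (hl : l ≠ 0) (hz : z ≠ 0) (hs : s ≠ 0) :
    (l * z ^ 2 * s)⁻¹ - (l ^ 2)⁻¹ * (z ^ 3)⁻¹ = z⁻¹ * ((l * z - s) / z ^ 3 / (l ^ 2 * (s / z))) := by
  have h1 : (l * z - s) / z ^ 3 / (l ^ 2 * (s / z)) = (l * z - s) / (l ^ 2 * z ^ 2 * s) := by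
    rw [div_div]
    congr 1
    field_simp
  have e1 : l * z ^ 2 * s ≠ 0 := mul_ne_zero (mul_ne_zero hl (pow_ne_zero 2 hz)) hs
  have e2 : l ^ 2 * z ^ 3 ≠ 0 := mul_ne_zero (pow_ne_zero 2 hl) (pow_ne_zero 3 hz)
  have e3 : l ^ 2 * z ^ 2 * s * z ≠ 0 :=
    mul_ne_zero (mul_ne_zero (mul_ne_zero (pow_ne_zero 2 hl) (pow_ne_zero 2 hz)) hs) hz
  rw [h1, inv_eq_one_div, inv_eq_one_div, inv_eq_one_div, div_mul_div_comm, one_mul,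
    div_sub_div _ _ e1 e2, mul_comm z⁻¹, ← one_div z, div_mul_div_comm, mul_one,
    div_eq_div_iff (mul_ne_zero e1 e2) e3]
  ring

/-- `(1/(2πi)) ∮_{|k − nπ/ℓ| = r} cot(kℓ)/(k sin(kℓ)) dk` equals
`−(−1)ⁿ/(n²π²)` if `n ≠ 0` and `−1/6` if `n = 0`, for `0 < r < π/ℓ`. -/
theorem circleIntegral_cot_div_k_sin
    (ℓ : ℝ) (hℓ : 0 < ℓ) (n : ℤ) (r : ℝ) (hr : 0 < r) (hr' : r < π / ℓ) :
    (1 / (2 * (π : ℂ) * Complex.I)) *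
        (∮ k in C((((n : ℝ) * π / ℓ : ℝ) : ℂ), r),
          Complex.cot (k * ℓ) / (k * Complex.sin (k * ℓ)))
      = if n = 0 then -(1 / 6) else -((-1) ^ n / ((n : ℂ) ^ 2 * (π : ℂ) ^ 2)) := by
  have hπ : (0:ℝ) < π := Real.pi_pos
  have hℓ0 : (ℓ:ℂ) ≠ 0 := Complex.ofReal_ne_zero.2 hℓ.ne'
  have hr0 : (0:ℝ) ≤ r := hr.le
  set a : ℂ := ((((n : ℝ)) * π / ℓ : ℝ) : ℂ) with ha
  have haL : a * (ℓ:ℂ) = (((n : ℝ) * π : ℝ) : ℂ) := by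
    rw [ha, ← Complex.ofReal_mul, div_mul_cancel₀ _ hℓ.ne']
  have hsin_a : Complex.sin (a * ℓ) = 0 := by
    rw [haL, ← Complex.ofReal_sin]
    norm_cast
    exact Real.sin_int_mul_pi n
  have hcos_a : Complex.cos (a * ℓ) = (-1) ^ n := by
    rw [haL, ← Complex.ofReal_cos]
    have : Real.cos ((n:ℝ) * π) = (-1) ^ n := by
      simpa using Real.cos_int_mul_pi_sub 0 n
    rw [this]
    push_cast
    ring
  -- zeros of sin on the closed ball
  have hsin_ne : ∀ k ∈ closedBall a r, k ≠ a → Complex.sin (k * ℓ) ≠ 0 := by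
    intro k hk hka hzero
    obtain ⟨m, hm⟩ := Complex.sin_eq_zero_iff.1 hzero
    have hkval : k = (((m : ℝ) * π / ℓ : ℝ) : ℂ) := by
      have : k * (ℓ:ℂ) = ((m:ℂ)) * (π:ℂ) := hm
      push_cast
      field_simp at this ⊢
      linear_combination this
    have hmn : m ≠ n := by
      intro h
      apply hka
      rw [hkval, h, ha]
    have hdist : dist k a = |(m : ℝ) * π / ℓ - (n : ℝ) * π / ℓ| := by
      rw [hkval, ha, Complex.dist_eq, ← Complex.ofReal_sub, Complex.norm_real, Real.norm_eq_abs]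
    have hge : π / ℓ ≤ dist k a := by
      rw [hdist]
      have : (m : ℝ) * π / ℓ - (n : ℝ) * π / ℓ = ((m - n : ℤ) : ℝ) * (π / ℓ) := by
        push_cast; ring
      rw [this, abs_mul, abs_of_pos (div_pos hπ hℓ)]
      have h1 : (1:ℝ) ≤ |((m - n : ℤ) : ℝ)| := by
        rw [← Int.cast_abs]
        exact_mod_cast Int.one_le_abs (sub_ne_zero.2 hmn)
      nlinarith [div_pos hπ hℓ]
    have := mem_closedBall.1 hk
    linarith
  have hsph_ne_a : ∀ k ∈ sphere a r, k ≠ a := by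
    intro k hk h
    rw [mem_sphere, h, dist_self] at hk
    exact hr.ne' hk.symm
  have hsph_sin : ∀ k ∈ sphere a r, Complex.sin (k * ℓ) ≠ 0 := fun k hk =>
    hsin_ne k (sphere_subset_closedBall hk) (hsph_ne_a k hk)
  have hsph_k0 : ∀ k ∈ sphere a r, k ≠ 0 := by
    intro k hk h0
    exact hsph_sin k hk (by rw [h0, zero_mul, Complex.sin_zero])
  -- decomposition of the integrand
  set Φ : ℂ → ℂ := fun z => Complex.cos (z * ℓ) / (z * Complex.sin (z * ℓ) ^ 2)
      + ((ℓ:ℂ) * z ^ 2 * Complex.sin (z * ℓ))⁻¹ with hΦ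
  set G : ℂ → ℂ := fun z => ((ℓ:ℂ) * z ^ 2 * Complex.sin (z * ℓ))⁻¹ with hG
  have hEq : Set.EqOn (fun k => Complex.cot (k * ℓ) / (k * Complex.sin (k * ℓ)))
      (fun k => Φ k - G k) (sphere a r) := by
    intro k hk
    have hs := hsph_sin k hk
    have hk0 := hsph_k0 k hk
    simp only [hΦ, hG]
    rw [add_sub_cancel_right, Complex.cot_eq_cos_div_sin, div_div]
    congr 1
    ring
  have hcont_sin : Continuous fun z : ℂ => Complex.sin (z * ℓ) :=
    Complex.continuous_sin.comp (continuous_id.mul continuous_const)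
  have hden_ne : ∀ k ∈ sphere a r, (ℓ:ℂ) * k ^ 2 * Complex.sin (k * ℓ) ≠ 0 := fun k hk =>
    mul_ne_zero (mul_ne_zero hℓ0 (pow_ne_zero 2 (hsph_k0 k hk))) (hsph_sin k hk)
  have hcont_den : ContinuousOn (fun z : ℂ => (ℓ:ℂ) * z ^ 2 * Complex.sin (z * ℓ))
      (sphere a r) := ((continuous_const.mul (continuous_pow 2)).mul hcont_sin).continuousOn
  have hGcont : ContinuousOn G (sphere a r) := hcont_den.inv₀ hden_ne
  have hΦcont : ContinuousOn Φ (sphere a r) := by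
    apply ContinuousOn.add
    · exact ((Complex.continuous_cos.comp (continuous_id.mul continuous_const)).continuousOn).div
        ((continuous_id.mul (hcont_sin.pow 2)).continuousOn)
        (fun k hk => mul_ne_zero (hsph_k0 k hk) (pow_ne_zero 2 (hsph_sin k hk)))
    · exact hGcont
  have hΦint : CircleIntegrable Φ a r := hΦcont.circleIntegrable hr0
  have hGint : CircleIntegrable G a r := hGcont.circleIntegrable hr0
  have hΦzero : (∮ z in C(a, r), Φ z) = 0 := by
    apply circleIntegral.integral_eq_zero_of_hasDerivWithinAt hr0
      (f := fun z : ℂ => -((ℓ:ℂ) * z * Complex.sin (z * ℓ))⁻¹)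
    intro z hz
    exact (hasDerivAt_F1 (ℓ:ℂ) (hsph_sin z hz) (hsph_k0 z hz) hℓ0).hasDerivWithinAt
  have hsplit : (∮ k in C(a, r), Complex.cot (k * ℓ) / (k * Complex.sin (k * ℓ)))
      = -(∮ z in C(a, r), G z) := by
    rw [circleIntegral.integral_congr hr0 hEq, circleIntegral.integral_sub hΦint hGint, hΦzero,
      zero_sub]
  have h2πI : (2 * (π:ℂ) * Complex.I) ≠ 0 := by
    simp [Real.pi_ne_zero, Complex.I_ne_zero]
  rcases eq_or_ne n 0 with hn | hn
  · -- n = 0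
    subst hn
    have ha0 : a = 0 := by simp [ha]
    rw [ha0] at hsplit hsin_ne ⊢
    simp only [if_pos rfl]
    -- power series of g
    set g : ℂ → ℂ := fun z => (ℓ:ℂ) * z - Complex.sin (z * ℓ) with hgdef
    have hgdiff : Differentiable ℂ g := by
      intro z
      exact ((differentiable_id.const_mul _) z).sub ((hasDerivAt_sinL (ℓ:ℂ) z).differentiableAt)
    obtain ⟨p, hp⟩ := hgdiff.analyticAt 0
    obtain ⟨R0, hpb⟩ := id hp
    have hcoeff : ∀ m : ℕ, (m.factorial : ℂ) * p.coeff m = iteratedDeriv m g 0 := by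
      intro m
      rw [iteratedDeriv_eq_iteratedFDeriv]
      have h := hpb.factorial_smul (1 : ℂ) m
      rw [nsmul_eq_mul] at h
      exact h
    have hg0 : g 0 = 0 := by simp [hgdef]
    have hd1 : deriv g = fun z => (ℓ:ℂ) - Complex.cos (z * ℓ) * ℓ := by
      funext z
      show deriv g z = (ℓ:ℂ) - Complex.cos (z * ℓ) * ℓ
      exact (((hasDerivAt_id z).const_mul ((ℓ:ℂ))).sub (hasDerivAt_sinL (ℓ:ℂ) z)).deriv.trans
        (by ring)
    have hd2 : deriv (fun z => (ℓ:ℂ) - Complex.cos (z * ℓ) * ℓ) = fun z =>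
        Complex.sin (z * ℓ) * ℓ * ℓ := by
      funext z
      have hc : HasDerivAt (fun z : ℂ => Complex.cos (z * ℓ)) (-Complex.sin (z * ℓ) * ℓ) z := by
        exact ((Complex.hasDerivAt_cos (z * ℓ)).comp z ((hasDerivAt_id z).mul_const (ℓ:ℂ))).congr_deriv (g' := -Complex.sin (z * ℓ) * ℓ) (by ring)
      show deriv _ z = Complex.sin (z * ℓ) * ℓ * ℓ
      exact ((((hasDerivAt_const z ((ℓ:ℂ))).sub (hc.mul_const (ℓ:ℂ)))).deriv).trans (by ring)
    have hi1 : iteratedDeriv 1 g 0 = 0 := by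
      rw [iteratedDeriv_one, hd1]; simp
    have hi2 : iteratedDeriv 2 g 0 = 0 := by
      rw [show (2:ℕ) = 1 + 1 from rfl, iteratedDeriv_succ', iteratedDeriv_one, hd1, hd2]
      simp
    have hi3 : iteratedDeriv 3 g 0 = (ℓ:ℂ) ^ 3 := by
      rw [show (3:ℕ) = 2 + 1 from rfl, iteratedDeriv_succ', show (2:ℕ) = 1 + 1 from rfl,
        iteratedDeriv_succ', iteratedDeriv_one, hd1, hd2]
      have h5 : deriv (fun z => Complex.sin (z * ℓ) * ℓ * ℓ) 0 =
          Complex.cos (0 * ℓ) * ℓ * ℓ * ℓ := by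
        exact (((hasDerivAt_sinL (ℓ:ℂ) 0).mul_const (ℓ:ℂ)).mul_const (ℓ:ℂ)).deriv.trans
          (by ring)
      rw [h5, zero_mul, Complex.cos_zero]
      ring
    have hp1 : p.coeff 1 = 0 := by
      have h := hcoeff 1; rw [hi1] at h
      exact (mul_eq_zero.1 h).resolve_left (by norm_num [Nat.factorial])
    have hp2 : p.coeff 2 = 0 := by
      have h := hcoeff 2; rw [hi2] at h
      exact (mul_eq_zero.1 h).resolve_left (by norm_num [Nat.factorial])
    have hp3 : p.coeff 3 = (ℓ:ℂ) ^ 3 / 6 := by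
      have := hcoeff 3; rw [hi3] at this
      have h6 : ((Nat.factorial 3 : ℕ) : ℂ) = 6 := by norm_num [Nat.factorial]
      rw [h6] at this
      field_simp
      linear_combination this
    -- iterated dslopes
    set g1 : ℂ → ℂ := dslope g 0 with hg1
    set g2 : ℂ → ℂ := dslope g1 0 with hg2
    set N : ℂ → ℂ := dslope g2 0 with hN
    have hiter1 : (swap dslope 0)^[1] g = g1 := by
      rw [Function.iterate_one, hg1]
    have hiter2 : (swap dslope 0)^[2] g = g2 := by
      rw [show (2:ℕ) = 1 + 1 from rfl, Function.iterate_succ_apply', hiter1]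
    have hiter3 : (swap dslope 0)^[3] g = N := by
      rw [show (3:ℕ) = 2 + 1 from rfl, Function.iterate_succ_apply', hiter2]
    have hval : ∀ m : ℕ, ((swap dslope 0)^[m] g) 0 = p.coeff m := by
      intro m
      have h := (HasFPowerSeriesAt.has_fpower_series_iterate_dslope_fslope m hp).coeff_zero
        (fun _ => (1:ℂ))
      have h2 : (FormalMultilinearSeries.fslope^[m] p).coeff 0 = p.coeff m := by
        simpa using FormalMultilinearSeries.coeff_iterate_fslope (p := p) m 0
      rw [← h2]
      exact h.symm
    have hg10 : g1 0 = 0 := by rw [← hiter1, hval 1, hp1]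
    have hg20 : g2 0 = 0 := by rw [← hiter2, hval 2, hp2]
    have hN0 : N 0 = (ℓ:ℂ) ^ 3 / 6 := by rw [← hiter3, hval 3, hp3]
    have hg1val : ∀ z : ℂ, z ≠ 0 → g1 z = g z / z := by
      intro z hz
      rw [hg1, dslope_of_ne _ hz, slope_def_field, hg0, sub_zero, sub_zero]
    have hg2val : ∀ z : ℂ, z ≠ 0 → g2 z = g z / z ^ 2 := by
      intro z hz
      rw [hg2, dslope_of_ne _ hz, slope_def_field, hg10, sub_zero, sub_zero, hg1val z hz]
      rw [div_div, ← sq]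
    have hNval : ∀ z : ℂ, z ≠ 0 → N z = g z / z ^ 3 := by
      intro z hz
      rw [hN, dslope_of_ne _ hz, slope_def_field, hg20, sub_zero, sub_zero, hg2val z hz]
      rw [div_div, ← pow_succ]
    -- S₀
    set S0 : ℂ → ℂ := dslope (fun z => Complex.sin (z * ℓ)) 0 with hS0
    have hS0at0 : S0 0 = (ℓ:ℂ) := by
      rw [hS0, dslope_same]
      rw [(hasDerivAt_sinL (ℓ:ℂ) 0).deriv]
      simp
    have hS0val : ∀ z : ℂ, z ≠ 0 → S0 z = Complex.sin (z * ℓ) / z := by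
      intro z hz
      rw [hS0, dslope_of_ne _ hz, slope_def_field]
      simp
    have hball_nhds : closedBall (0:ℂ) r ∈ nhds (0:ℂ) := closedBall_mem_nhds _ hr
    have hS0diff : DifferentiableOn ℂ S0 (closedBall 0 r) :=
      (Complex.differentiableOn_dslope hball_nhds).2
        (fun z _ => ((hasDerivAt_sinL (ℓ:ℂ) z).differentiableAt).differentiableWithinAt)
    have hNdiff : DifferentiableOn ℂ N (closedBall 0 r) := by
      rw [hN]
      refine (Complex.differentiableOn_dslope hball_nhds).2 ?_
      rw [hg2]
      refine (Complex.differentiableOn_dslope hball_nhds).2 ?_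
      rw [hg1]
      refine (Complex.differentiableOn_dslope hball_nhds).2 ?_
      exact hgdiff.differentiableOn
    have hS0ne : ∀ z ∈ closedBall (0:ℂ) r, S0 z ≠ 0 := by
      intro z hz
      rcases eq_or_ne z 0 with rfl | hz0
      · rw [hS0at0]; exact hℓ0
      · rw [hS0val z hz0]
        exact div_ne_zero (hsin_ne z hz hz0) hz0
    set D : ℂ → ℂ := fun z => N z / ((ℓ:ℂ) ^ 2 * S0 z) with hD
    have hDdiff : DifferentiableOn ℂ D (closedBall 0 r) := by
      refine hNdiff.div ((differentiableOn_const _).mul hS0diff) ?_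
      intro z hz
      exact mul_ne_zero (pow_ne_zero 2 hℓ0) (hS0ne z hz)
    have hD0 : D 0 = 1 / 6 := by
      rw [hD]
      simp only []
      rw [hN0, hS0at0]
      field_simp
    have hcauchy := Complex.two_pi_I_inv_smul_circleIntegral_sub_inv_smul_of_differentiable_on_off_countable
      (s := (∅ : Set ℂ)) Set.countable_empty (mem_ball_self hr) hDdiff.continuousOn
      (fun x hx => (hDdiff x (ball_subset_closedBall hx.1)).differentiableAt
        (mem_nhds_iff.2 ⟨ball 0 r, ball_subset_closedBall, isOpen_ball, hx.1⟩))
    -- the 1/z³ part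
    set h3 : ℂ → ℂ := fun z => ((ℓ:ℂ)^2)⁻¹ * (z - 0) ^ (-3 : ℤ) with hh3
    have hzpow_int : CircleIntegrable (fun z : ℂ => (z - 0) ^ (-3 : ℤ)) 0 r :=
      circleIntegrable_sub_zpow_iff.2 (Or.inr (Or.inr (by simp [abs_of_pos hr, hr.ne])))
    have hh3int : CircleIntegrable h3 0 r := by
      have h := hzpow_int
      simp only [CircleIntegrable] at h ⊢
      exact h.const_mul _
    have hh3zero : (∮ z in C(0, r), h3 z) = 0 := by
      rw [hh3]
      rw [circleIntegral.integral_const_mul]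
      rw [circleIntegral.integral_sub_zpow_of_ne (by decide) 0 0 r]
      ring
    have hGD : Set.EqOn (fun z => G z - h3 z) (fun z => (z - 0)⁻¹ • D z) (sphere (0:ℂ) r) := by
      intro z hz
      have hz0 : z ≠ 0 := by
        intro h
        rw [mem_sphere, h, dist_self] at hz
        exact hr.ne' hz.symm
      have hs : Complex.sin (z * ℓ) ≠ 0 := hsin_ne z (sphere_subset_closedBall hz) hz0
      have hgz : g z = (ℓ:ℂ) * z - Complex.sin (z * ℓ) := by rw [hgdef]
      have hpow : (z:ℂ) ^ (-3 : ℤ) = (z ^ (3:ℕ))⁻¹ := by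
        rw [zpow_neg]
        norm_num
      simp only [hG, hh3, hD, smul_eq_mul, sub_zero]
      rw [hNval z hz0, hS0val z hz0, hgz, hpow]
      exact aux_decomp (ℓ:ℂ) z _ hℓ0 hz0 hs
    have hGint0 : CircleIntegrable G 0 r := by
      rw [ha0] at hGint; exact hGint
    have hGval : (∮ z in C(0, r), G z) = 2 * (π:ℂ) * Complex.I * D 0 := by
      have hsub : (∮ z in C(0, r), (G z - h3 z)) = (∮ z in C(0, r), G z) - 0 := by
        rw [circleIntegral.integral_sub hGint0 hh3int, hh3zero]
      have hcongr : (∮ z in C(0, r), (G z - h3 z)) = ∮ z in C(0, r), (z - 0)⁻¹ • D z :=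
        circleIntegral.integral_congr hr0 hGD
      have := hcauchy
      rw [inv_smul_eq_iff₀ h2πI] at this
      rw [← sub_zero (∮ z in C(0, r), G z), ← hsub, hcongr, this, smul_eq_mul]
    rw [hsplit, hGval, hD0]
    field_simp
    norm_num
  · -- n ≠ 0
    simp only [if_neg hn]
    have hn' : (n:ℂ) ≠ 0 := Int.cast_ne_zero.2 hn
    have hπ' : (π:ℂ) ≠ 0 := Complex.ofReal_ne_zero.2 hπ.ne'
    have haval : a = (n:ℂ) * π / ℓ := by rw [ha]; push_cast; ring
    have hball_k0 : ∀ k ∈ closedBall a r, k ≠ 0 := by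
      intro k hk h0
      have hd : dist k a ≤ r := mem_closedBall.1 hk
      rw [h0] at hd
      have : dist (0:ℂ) a = |(n:ℝ)| * (π / ℓ) := by
        rw [ha, Complex.dist_eq, zero_sub, norm_neg, Complex.norm_real, Real.norm_eq_abs]
        rw [abs_div, abs_of_pos hℓ, abs_mul, abs_of_pos hπ]
        ring
      have h1 : (1:ℝ) ≤ |(n:ℝ)| := by
        rw [← Int.cast_abs]
        exact_mod_cast Int.one_le_abs hn
      have hposπℓ : 0 < π / ℓ := div_pos hπ hℓ
      nlinarith [this ▸ hd]
    set S : ℂ → ℂ := dslope (fun z => Complex.sin (z * ℓ)) a with hS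
    have hSa : S a = (ℓ:ℂ) * (-1) ^ n := by
      rw [hS, dslope_same, (hasDerivAt_sinL (ℓ:ℂ) a).deriv, hcos_a]
      ring
    have hSval : ∀ z : ℂ, z ≠ a → S z = Complex.sin (z * ℓ) / (z - a) := by
      intro z hz
      rw [hS, dslope_of_ne _ hz, slope_def_field, hsin_a, sub_zero]
    have hneg1 : ((-1 : ℂ)) ^ n ≠ 0 := zpow_ne_zero n (by norm_num)
    have hSne : ∀ z ∈ closedBall a r, S z ≠ 0 := by
      intro z hz
      rcases eq_or_ne z a with rfl | hza
      · rw [hSa]; exact mul_ne_zero hℓ0 hneg1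
      · rw [hSval z hza]
        exact div_ne_zero (hsin_ne z hz hza) (sub_ne_zero.2 hza)
    have hball_nhds : closedBall a r ∈ nhds a := closedBall_mem_nhds _ hr
    have hSdiff : DifferentiableOn ℂ S (closedBall a r) :=
      (Complex.differentiableOn_dslope hball_nhds).2
        (fun z _ => ((hasDerivAt_sinL (ℓ:ℂ) z).differentiableAt).differentiableWithinAt)
    set H : ℂ → ℂ := fun z => ((ℓ:ℂ) * z ^ 2 * S z)⁻¹ with hH
    have hHden : ∀ z ∈ closedBall a r, (ℓ:ℂ) * z ^ 2 * S z ≠ 0 := by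
      intro z hz
      exact mul_ne_zero (mul_ne_zero hℓ0 (pow_ne_zero 2 (hball_k0 z hz))) (hSne z hz)
    have hHdiff : DifferentiableOn ℂ H (closedBall a r) := by
      refine DifferentiableOn.inv ?_ hHden
      exact ((differentiableOn_const _).mul (differentiable_pow 2).differentiableOn).mul hSdiff
    have hHa : H a = ((ℓ:ℂ) * a ^ 2 * ((ℓ:ℂ) * (-1) ^ n))⁻¹ := by rw [hH]; simp only []; rw [hSa]
    have hGH : Set.EqOn G (fun z => (z - a)⁻¹ • H z) (sphere a r) := by
      intro z hz
      have hza : z ≠ a := hsph_ne_a z hz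
      have hz0 : z ≠ 0 := hsph_k0 z hz
      have hs : Complex.sin (z * ℓ) ≠ 0 := hsph_sin z hz
      simp only [hG, hH, smul_eq_mul]
      rw [hSval z hza]
      have hza' : z - a ≠ 0 := sub_ne_zero.2 hza
      field_simp
    have hcauchy := Complex.two_pi_I_inv_smul_circleIntegral_sub_inv_smul_of_differentiable_on_off_countable
      (s := (∅ : Set ℂ)) Set.countable_empty (mem_ball_self hr) hHdiff.continuousOn
      (fun x hx => (hHdiff x (ball_subset_closedBall hx.1)).differentiableAt
        (mem_nhds_iff.2 ⟨ball a r, ball_subset_closedBall, isOpen_ball, hx.1⟩))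
    have hGval : (∮ z in C(a, r), G z) = 2 * (π:ℂ) * Complex.I * H a := by
      rw [circleIntegral.integral_congr hr0 hGH]
      rw [inv_smul_eq_iff₀ h2πI] at hcauchy
      rw [hcauchy, smul_eq_mul]
    rw [hsplit, hGval, hHa, haval]
    have hsq : ((-1:ℂ)) ^ n * ((-1:ℂ)) ^ n = 1 := by
      rw [← zpow_add₀ (by norm_num : (-1:ℂ) ≠ 0), show n + n = 2 * n by ring, zpow_mul]
      norm_num
    have hinv : (((-1:ℂ)) ^ n)⁻¹ = ((-1:ℂ)) ^ n := inv_eq_of_mul_eq_one_left hsq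
    have hbig : (ℓ:ℂ) * ((n:ℂ) * π / ℓ) ^ 2 * ((ℓ:ℂ) * (-1) ^ n)
        = (n:ℂ) ^ 2 * (π:ℂ) ^ 2 * (-1) ^ n := by
      field_simp
    rw [hbig, mul_inv, hinv]
    rw [show ((n:ℂ) ^ 2 * (π:ℂ) ^ 2)⁻¹ * (-1) ^ n = (-1) ^ n / ((n:ℂ) ^ 2 * (π:ℂ) ^ 2) by ring]
    rw [show (1 / (2 * (π:ℂ) * Complex.I)) * -(2 * (π:ℂ) * Complex.I *
        ((-1) ^ n / ((n:ℂ) ^ 2 * (π:ℂ) ^ 2)))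
      = -(((2 * (π:ℂ) * Complex.I)⁻¹ * (2 * (π:ℂ) * Complex.I)) *
        ((-1) ^ n / ((n:ℂ) ^ 2 * (π:ℂ) ^ 2))) by ring, inv_mul_cancel₀ h2πI, one_mul]
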